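/- Let (V,φ) be a topological flow and U an open 𝕂-subspace of V such that the φ-cotrajectory C(φ,U) is cocyclic and non-stationary. Then: (1) the closed subspace φ⁻ⁿU has codimension 1 in V for every n ∈ ℕ; (2) the family {φ⁻ⁿU : n ∈ ℕ} is coindependent in V; (3) H*(φ,U) = 1. -/

import Mathlib

open scoped ENNReal

/-- A topological `𝕂`-vector space `V` is *linearly compact* if it is Hausdorff, has a
neighbourhood basis at `0` consisting of open `𝕂`-subspaces, and every family of closed
affine subspaces (cosets of closed `𝕂`-subspaces) with the finite intersection property
has nonempty intersection. -/
def IsLinearlyCompact (𝕂 V : Type*) [Field 𝕂] [AddCommGroup V] [Module 𝕂 V]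
    [TopologicalSpace V] : Prop :=
  T2Space V ∧
  (∀ S ∈ nhds (0 : V), ∃ U : Submodule 𝕂 V, IsOpen (U : Set V) ∧ (U : Set V) ⊆ S) ∧
  ∀ (ι : Type) (N : ι → Submodule 𝕂 V) (v : ι → V),
    (∀ i, IsClosed ((N i : Set V))) →
    (∀ F : Finset ι, (⋂ i ∈ F, ((v i + ·) '' (N i : Set V))).Nonempty) →
    (⋂ i, ((v i + ·) '' (N i : Set V))).Nonempty

/-- A family of proper `𝕂`-subspaces `N i` of `V` is *coindependent* if for every finite
set `F` of indices and every `i ∈ F`, `N i + ⋂_{j ∈ F, j ≠ i} N j = V`. -/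
def Coindependent (𝕂 : Type*) {V ι : Type*} [Field 𝕂] [AddCommGroup V] [Module 𝕂 V]
    (N : ι → Submodule 𝕂 V) : Prop :=
  ∀ (F : Finset ι) (i : ι), i ∈ F → N i ⊔ (⨅ j ∈ F, ⨅ _ : j ≠ i, N j) = ⊤

/-- `Cn φ U n = U ∩ φ⁻¹U ∩ ⋯ ∩ φ⁻⁽ⁿ⁻¹⁾U`. -/
noncomputable def Cn {𝕂 V : Type*} [Field 𝕂] [AddCommGroup V] [Module 𝕂 V]
    (φ : V →ₗ[𝕂] V) (U : Submodule 𝕂 V) (n : ℕ) : Submodule 𝕂 V :=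
  ⨅ k ∈ Finset.range n, Submodule.comap (φ ^ k) U

/-- The `φ`-cotrajectory `C(φ,U) = ⋂_{n ∈ ℕ} φ⁻ⁿU = ⋂_{n ≥ 1} C_n(φ,U)`. -/
noncomputable def Cotraj {𝕂 V : Type*} [Field 𝕂] [AddCommGroup V] [Module 𝕂 V]
    (φ : V →ₗ[𝕂] V) (U : Submodule 𝕂 V) : Submodule 𝕂 V :=
  ⨅ k : ℕ, Submodule.comap (φ ^ k) U

/-- `H*(φ,U) = lim_{n→∞} (1/n)·dim_𝕂 (U / C_n(φ,U))`, realized as a limsup in `ℝ≥0∞`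
(the limit exists, so it coincides with the limsup). -/
noncomputable def HStar {𝕂 V : Type*} [Field 𝕂] [AddCommGroup V] [Module 𝕂 V]
    (φ : V →ₗ[𝕂] V) (U : Submodule 𝕂 V) : ℝ≥0∞ :=
  Filter.atTop.limsup fun n : ℕ =>
    (((Module.rank 𝕂 (↥U ⧸ Submodule.comap U.subtype (Cn φ U n))).toENat : ℕ∞) : ℝ≥0∞) /
      (n : ℝ≥0∞)

/-- The topological entropy `ent*(V,φ) = sup_U H*(φ,U)`, the supremum ranging over all
open `𝕂`-subspaces `U` of `V`. -/
noncomputable def entStar (𝕂 V : Type*) [Field 𝕂] [AddCommGroup V] [Module 𝕂 V]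
    [TopologicalSpace V] (φ : V →ₗ[𝕂] V) : ℝ≥0∞ :=
  ⨆ (U : Submodule 𝕂 V) (_ : IsOpen (U : Set V)), HStar φ U

section AuxLemmas
open Module Submodule

variable {𝕂 V : Type*} [Field 𝕂] [AddCommGroup V] [Module 𝕂 V]
  (φ : V →ₗ[𝕂] V) (U : Submodule 𝕂 V)

lemma comap_pow_succ (n : ℕ) :
    Submodule.comap (φ ^ (n+1)) U = Submodule.comap φ (Submodule.comap (φ ^ n) U) := by
  rw [pow_succ, Module.End.mul_eq_comp, Submodule.comap_comp]

lemma Cn_zero : Cn φ U 0 = ⊤ := by simp [Cn]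

lemma Cn_eq_inf (n : ℕ) : Cn φ U n = (Finset.range n).inf fun k => Submodule.comap (φ ^ k) U :=
  (Finset.inf_eq_iInf _ _).symm

lemma Cn_succ (n : ℕ) : Cn φ U (n+1) = Cn φ U n ⊓ Submodule.comap (φ ^ n) U := by
  rw [Cn_eq_inf, Cn_eq_inf, Finset.range_add_one, Finset.inf_insert, inf_comm]

lemma Cn_one : Cn φ U 1 = U := by
  rw [Cn_succ, Cn_zero, top_inf_eq, pow_zero]
  ext x; simp

lemma Cn_le {n k : ℕ} (h : k < n) : Cn φ U n ≤ Submodule.comap (φ ^ k) U := by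
  rw [Cn_eq_inf]
  exact Finset.inf_le (Finset.mem_range.mpr h)

lemma Cn_succ_left (n : ℕ) : Cn φ U (n+1) = U ⊓ Submodule.comap φ (Cn φ U n) := by
  induction n with
  | zero => simp [Cn_one, Cn_zero]
  | succ n ih =>
      conv_lhs => rw [Cn_succ φ U (n+1), ih, comap_pow_succ, inf_assoc,
        ← Submodule.comap_inf, ← Cn_succ]

lemma Cn_antitone {m n : ℕ} (h : m ≤ n) : Cn φ U n ≤ Cn φ U m := by
  rw [Cn_eq_inf, Cn_eq_inf]
  exact Finset.inf_mono (Finset.range_subset_range.mpr h)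

lemma Cn_stab {n : ℕ} (h : Cn φ U (n+1) = Cn φ U n) :
    ∀ m, n ≤ m → Cn φ U m = Cn φ U n := by
  intro m hm
  induction m with
  | zero => rw [Nat.le_zero.mp hm]
  | succ m ih =>
      rcases Nat.lt_or_ge m n with h1 | h1
      · have hn : n = m + 1 := by omega
        rw [hn]
      · have hthis := ih h1
        calc Cn φ U (m+1) = U ⊓ Submodule.comap φ (Cn φ U m) := Cn_succ_left φ U m
          _ = U ⊓ Submodule.comap φ (Cn φ U n) := by rw [hthis]
          _ = Cn φ U (n+1) := (Cn_succ_left φ U n).symm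
          _ = Cn φ U n := h

lemma Cotraj_eq_of_stab {n : ℕ} (h : ∀ m, n ≤ m → Cn φ U m = Cn φ U n) :
    Cotraj φ U = Cn φ U n := by
  apply le_antisymm
  · rw [Cn_eq_inf]
    apply Finset.le_inf
    intro k _
    exact iInf_le _ k
  · apply le_iInf
    intro k
    have : Cn φ U (max n (k+1)) = Cn φ U n := h _ (le_max_left _ _)
    calc Cn φ U n = Cn φ U (max n (k+1)) := this.symm
      _ ≤ Submodule.comap (φ ^ k) U := Cn_le φ U (by omega : k < max n (k+1))



open Module Submodule

variable {𝕂 V : Type*} [Field 𝕂] [AddCommGroup V] [Module 𝕂 V]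

noncomputable def quotMapOfLe (A B : Submodule 𝕂 V) (h : A ≤ B) : (V ⧸ A) →ₗ[𝕂] V ⧸ B :=
  A.liftQ B.mkQ (by rwa [Submodule.ker_mkQ])

lemma quotMapOfLe_surjective (A B : Submodule 𝕂 V) (h : A ≤ B) :
    Function.Surjective (quotMapOfLe A B h) := by
  intro y
  obtain ⟨x, rfl⟩ := B.mkQ_surjective y
  exact ⟨A.mkQ x, rfl⟩

lemma finQuot_mono {A B : Submodule 𝕂 V} (h : A ≤ B) [FiniteDimensional 𝕂 (V ⧸ A)] :
    FiniteDimensional 𝕂 (V ⧸ B) ∧ finrank 𝕂 (V ⧸ B) ≤ finrank 𝕂 (V ⧸ A) := by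
  have hs := quotMapOfLe_surjective A B h
  refine ⟨Module.Finite.of_surjective _ hs, ?_⟩
  calc finrank 𝕂 (V ⧸ B) = finrank 𝕂 (LinearMap.range (quotMapOfLe A B h)) := by
        rw [LinearMap.range_eq_top.mpr hs, finrank_top]
    _ ≤ finrank 𝕂 (V ⧸ A) := by
        have := LinearMap.finrank_range_add_finrank_ker (quotMapOfLe A B h)
        omega

lemma finQuot_strict {A B : Submodule 𝕂 V} (h : A < B) [FiniteDimensional 𝕂 (V ⧸ A)] :
    finrank 𝕂 (V ⧸ B) < finrank 𝕂 (V ⧸ A) := by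
  have hle := h.le
  have hs := quotMapOfLe_surjective A B hle
  have hrange : finrank 𝕂 (V ⧸ B) = finrank 𝕂 (LinearMap.range (quotMapOfLe A B hle)) := by
    rw [LinearMap.range_eq_top.mpr hs, finrank_top]
  have hrk := LinearMap.finrank_range_add_finrank_ker (quotMapOfLe A B hle)
  obtain ⟨x, hxB, hxA⟩ := SetLike.exists_of_lt h
  have hker : Nontrivial (LinearMap.ker (quotMapOfLe A B hle)) := by
    refine Submodule.nontrivial_iff_ne_bot.mpr fun hbot => hxA ?_
    have hmem : A.mkQ x ∈ LinearMap.ker (quotMapOfLe A B hle) := by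
      simp only [LinearMap.mem_ker, quotMapOfLe, Submodule.liftQ_apply, Submodule.mkQ_apply]
      rwa [Submodule.Quotient.mk_eq_zero]
    rw [hbot, Submodule.mem_bot] at hmem
    rwa [Submodule.mkQ_apply, Submodule.Quotient.mk_eq_zero] at hmem
  have hkpos : 0 < finrank 𝕂 (LinearMap.ker (quotMapOfLe A B hle)) :=
    finrank_pos_iff.mpr hker
  omega

lemma finQuot_inf {A B : Submodule 𝕂 V} [FiniteDimensional 𝕂 (V ⧸ A)]
    [FiniteDimensional 𝕂 (V ⧸ B)] :
    FiniteDimensional 𝕂 (V ⧸ (A ⊓ B)) ∧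
      finrank 𝕂 (V ⧸ (A ⊓ B)) ≤ finrank 𝕂 (V ⧸ A) + finrank 𝕂 (V ⧸ B) := by
  set g := A.mkQ.prod B.mkQ
  have hker : A ⊓ B = LinearMap.ker g := by
    rw [LinearMap.ker_prod, Submodule.ker_mkQ, Submodule.ker_mkQ]
  have e : (V ⧸ (A ⊓ B)) ≃ₗ[𝕂] LinearMap.range g :=
    (Submodule.quotEquivOfEq _ _ hker).trans g.quotKerEquivRange
  have : FiniteDimensional 𝕂 (V ⧸ (A ⊓ B)) := Module.Finite.equiv e.symm
  refine ⟨this, ?_⟩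
  calc finrank 𝕂 (V ⧸ (A ⊓ B)) = finrank 𝕂 (LinearMap.range g) := e.finrank_eq
    _ ≤ finrank 𝕂 ((V ⧸ A) × (V ⧸ B)) := Submodule.finrank_le _
    _ = finrank 𝕂 (V ⧸ A) + finrank 𝕂 (V ⧸ B) := Module.finrank_prod

lemma finQuot_three {C U : Submodule 𝕂 V} (h : C ≤ U) [FiniteDimensional 𝕂 (V ⧸ C)] :
    FiniteDimensional 𝕂 (↥U ⧸ Submodule.comap U.subtype C) ∧
      finrank 𝕂 (V ⧸ C) = finrank 𝕂 (V ⧸ U) + finrank 𝕂 (↥U ⧸ Submodule.comap U.subtype C) := by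
  set g := C.mkQ.comp U.subtype
  have hker : Submodule.comap U.subtype C = LinearMap.ker g := by
    rw [LinearMap.ker_comp, Submodule.ker_mkQ]
  have hrange : LinearMap.range g = Submodule.map C.mkQ U := by
    rw [LinearMap.range_comp, Submodule.range_subtype]
  have e : (↥U ⧸ Submodule.comap U.subtype C) ≃ₗ[𝕂] Submodule.map C.mkQ U :=
    ((Submodule.quotEquivOfEq _ _ hker).trans g.quotKerEquivRange).trans
      (LinearEquiv.ofEq _ _ hrange)
  have e2 : ((V ⧸ C) ⧸ Submodule.map C.mkQ U) ≃ₗ[𝕂] V ⧸ U :=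
    Submodule.quotientQuotientEquivQuotient C U h
  have hfd : FiniteDimensional 𝕂 (↥U ⧸ Submodule.comap U.subtype C) := by
    have : FiniteDimensional 𝕂 (Submodule.map C.mkQ U) := inferInstance
    exact Module.Finite.equiv e.symm
  refine ⟨hfd, ?_⟩
  have := Submodule.finrank_quotient_add_finrank (Submodule.map C.mkQ U)
    (R := 𝕂) (M := V ⧸ C)
  rw [e2.finrank_eq, ← e.finrank_eq] at this
  omega

lemma finQuot_inf_card (N : ℕ → Submodule 𝕂 V)
    (h1 : ∀ n, FiniteDimensional 𝕂 (V ⧸ N n) ∧ finrank 𝕂 (V ⧸ N n) = 1) (F : Finset ℕ) :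
    FiniteDimensional 𝕂 (V ⧸ F.inf N) ∧ finrank 𝕂 (V ⧸ F.inf N) ≤ F.card := by
  classical
  induction F using Finset.induction with
  | empty =>
      haveI : Subsingleton (V ⧸ (∅ : Finset ℕ).inf N) :=
        Submodule.Quotient.subsingleton_iff.mpr (by simp)
      exact ⟨inferInstance, by simp [finrank_zero_of_subsingleton]⟩
  | @insert a F ha ih =>
      haveI := ih.1
      haveI := (h1 a).1
      rw [Finset.inf_insert]
      obtain ⟨fd, hle⟩ := finQuot_inf (A := N a) (B := F.inf N)
      refine ⟨fd, ?_⟩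
      rw [Finset.card_insert_of_notMem ha]
      have := (h1 a).2
      omega

lemma finQuot_card_eq (N : ℕ → Submodule 𝕂 V)
    (h1 : ∀ n, FiniteDimensional 𝕂 (V ⧸ N n) ∧ finrank 𝕂 (V ⧸ N n) = 1)
    (hrange : ∀ m : ℕ, finrank 𝕂 (V ⧸ (Finset.range m).inf N) = m) (F : Finset ℕ) :
    finrank 𝕂 (V ⧸ F.inf N) = F.card := by
  classical
  obtain ⟨m, hFm⟩ := F.exists_nat_subset_range
  set G := Finset.range m \ F with hG
  have hunion : F ∪ G = Finset.range m := Finset.union_sdiff_of_subset hFm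
  have hcards : F.card + G.card = m := by
    rw [hG, Finset.card_sdiff_of_subset hFm, Finset.card_range]
    have := Finset.card_le_card hFm
    rw [Finset.card_range] at this
    omega
  have hinf : F.inf N ⊓ G.inf N = (Finset.range m).inf N := by
    rw [← hunion, Finset.inf_union]
  haveI := (finQuot_inf_card N h1 F).1
  haveI := (finQuot_inf_card N h1 G).1
  obtain ⟨_, hle⟩ := finQuot_inf (A := F.inf N) (B := G.inf N)
  rw [hinf, hrange m] at hle
  have hF := (finQuot_inf_card N h1 F).2
  have hGc := (finQuot_inf_card N h1 G).2
  omega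

variable {𝕂 V : Type*} [Field 𝕂] [AddCommGroup V] [Module 𝕂 V]

lemma coindependent_of_card (N : ℕ → Submodule 𝕂 V)
    (h1 : ∀ n, FiniteDimensional 𝕂 (V ⧸ N n) ∧ finrank 𝕂 (V ⧸ N n) = 1)
    (hcard : ∀ F : Finset ℕ, finrank 𝕂 (V ⧸ F.inf N) = F.card) :
    Coindependent 𝕂 N := by
  classical
  intro F i hiF
  have hX : (⨅ j ∈ F, ⨅ _ : j ≠ i, N j) = (F.erase i).inf N := by
    apply le_antisymm
    · apply Finset.le_inf
      intro j hj
      obtain ⟨hne, hjF⟩ := Finset.mem_erase.mp hj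
      exact le_trans (iInf₂_le j hjF) (iInf_le _ hne)
    · apply le_iInf₂
      intro j hjF
      apply le_iInf
      intro hne
      exact Finset.inf_le (Finset.mem_erase.mpr ⟨hne, hjF⟩)
  rw [hX]
  by_contra hne
  haveI := (h1 i).1
  have hle : N i ≤ N i ⊔ (F.erase i).inf N := le_sup_left
  rcases eq_or_lt_of_le hle with heq | hlt
  · -- X ≤ N i, contradiction with card count
    have hXle : (F.erase i).inf N ≤ N i := heq ▸ le_sup_right
    have hFinf : F.inf N = (F.erase i).inf N := by
      conv_lhs => rw [← Finset.insert_erase hiF]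
      rw [Finset.inf_insert]
      exact inf_eq_right.mpr hXle
    have h1c := hcard F
    have h2c := hcard (F.erase i)
    rw [hFinf] at h1c
    rw [h1c] at h2c
    have := Finset.card_erase_of_mem hiF
    have hpos : 0 < F.card := Finset.card_pos.mpr ⟨i, hiF⟩
    omega
  · have hstrict := finQuot_strict (𝕂 := 𝕂) hlt
    rw [(h1 i).2] at hstrict
    have hfd := (finQuot_mono (𝕂 := 𝕂) hle).1
    have h0 : finrank 𝕂 (V ⧸ (N i ⊔ (F.erase i).inf N)) = 0 := by omega
    haveI := hfd
    exact hne (Submodule.Quotient.subsingleton_iff.mp (Module.finrank_zero_iff.mp h0))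

end AuxLemmas

/-- Let `(V,φ)` be a topological flow and `U` an open `𝕂`-subspace of `V`
such that the `φ`-cotrajectory `C(φ,U)` is cocyclic (`dim_𝕂 (V/U) = 1`) and non-stationary
(`C(φ,U)` is not open).  Then (1) each closed subspace `φ⁻ⁿU` has codimension `1` in `V`;
(2) the family `{φ⁻ⁿU : n ∈ ℕ}` is coindependent in `V`; (3) `H*(φ,U) = 1`. -/
theorem stmt_2 {𝕂 V : Type*} [Field 𝕂] [TopologicalSpace 𝕂] [DiscreteTopology 𝕂]
    [AddCommGroup V] [Module 𝕂 V] [TopologicalSpace V] [IsTopologicalAddGroup V]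
    [ContinuousSMul 𝕂 V]
    (hV : IsLinearlyCompact 𝕂 V) (φ : V →ₗ[𝕂] V) (hφ : Continuous φ)
    (U : Submodule 𝕂 V) (hUopen : IsOpen (U : Set V))
    (hcocyclic : Module.finrank 𝕂 (V ⧸ U) = 1)
    (hns : ¬ IsOpen ((Cotraj φ U : Set V))) :
    (∀ n : ℕ, IsClosed ((Submodule.comap (φ ^ n) U : Set V)) ∧
        Module.finrank 𝕂 (V ⧸ Submodule.comap (φ ^ n) U) = 1) ∧
    Coindependent 𝕂 (fun n : ℕ => Submodule.comap (φ ^ n) U) ∧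
    HStar φ U = 1 := by

  classical
  have hcpow : ∀ n : ℕ, Continuous (φ ^ n : V →ₗ[𝕂] V) := by
    intro n
    induction n with
    | zero =>
        have : ⇑(φ ^ 0) = (id : V → V) := by ext x; simp
        rw [this]; exact continuous_id
    | succ n ih =>
        have : ⇑(φ ^ (n+1)) = ⇑(φ ^ n) ∘ ⇑φ := by
          ext x; simp [pow_succ, Module.End.mul_apply]
        rw [this]; exact ih.comp hφ
  have hNopen : ∀ n : ℕ, IsOpen ((Submodule.comap (φ ^ n) U : Set V)) := fun n =>
    hUopen.preimage (hcpow n)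
  have hNclosed : ∀ n : ℕ, IsClosed ((Submodule.comap (φ ^ n) U : Set V)) := fun n =>
    AddSubgroup.isClosed_of_isOpen (Submodule.comap (φ ^ n) U).toAddSubgroup (hNopen n)
  have hCnopen : ∀ n : ℕ, IsOpen ((Cn φ U n : Set V)) := by
    intro n
    induction n with
    | zero => rw [Cn_zero]; simpa using isOpen_univ
    | succ n ih =>
        rw [Cn_succ]
        simpa [Submodule.coe_inf] using ih.inter (hNopen n)
  have hne : ∀ n : ℕ, Cn φ U (n+1) ≠ Cn φ U n := by
    intro n h
    exact hns (by rw [Cotraj_eq_of_stab φ U (Cn_stab φ U h)]; exact hCnopen n)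
  have hCnlt : ∀ n : ℕ, Cn φ U (n+1) < Cn φ U n := fun n =>
    lt_of_le_of_ne (by rw [Cn_succ]; exact inf_le_left) (hne n)
  have hNtop : ∀ n : ℕ, Submodule.comap (φ ^ n) U ≠ ⊤ := fun n h =>
    hne n (by rw [Cn_succ, h, inf_top_eq])
  haveI hfinU : FiniteDimensional 𝕂 (V ⧸ U) := Module.finite_of_finrank_eq_succ hcocyclic
  have hNfin : ∀ n : ℕ, FiniteDimensional 𝕂 (V ⧸ Submodule.comap (φ ^ n) U) ∧
      Module.finrank 𝕂 (V ⧸ Submodule.comap (φ ^ n) U) = 1 := by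
    intro n
    have hker : LinearMap.ker (U.mkQ.comp (φ ^ n)) = Submodule.comap (φ ^ n) U := by
      rw [LinearMap.ker_comp, Submodule.ker_mkQ]
    set f := (Submodule.comap (φ ^ n) U).liftQ (U.mkQ.comp (φ ^ n)) (le_of_eq hker.symm)
      with hf
    have hinj : Function.Injective f := by
      rw [← LinearMap.ker_eq_bot]
      exact Submodule.ker_liftQ_eq_bot _ _ _ (le_of_eq hker)
    haveI hfd : FiniteDimensional 𝕂 (V ⧸ Submodule.comap (φ ^ n) U) :=
      FiniteDimensional.of_injective f hinj
    have hle : Module.finrank 𝕂 (V ⧸ Submodule.comap (φ ^ n) U) ≤ 1 := by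
      have := LinearMap.finrank_le_finrank_of_injective hinj
      rwa [hcocyclic] at this
    have hpos : Module.finrank 𝕂 (V ⧸ Submodule.comap (φ ^ n) U) ≠ 0 := by
      intro h0
      exact hNtop n
        (Submodule.Quotient.subsingleton_iff.mp (Module.finrank_zero_iff.mp h0))
    exact ⟨hfd, by omega⟩
  have hdim : ∀ n : ℕ, FiniteDimensional 𝕂 (V ⧸ Cn φ U n) ∧
      Module.finrank 𝕂 (V ⧸ Cn φ U n) = n := by
    intro n
    induction n with
    | zero =>
        haveI : Subsingleton (V ⧸ Cn φ U 0) :=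
          Submodule.Quotient.subsingleton_iff.mpr (Cn_zero φ U)
        exact ⟨inferInstance, Module.finrank_zero_of_subsingleton⟩
    | succ n ih =>
        haveI := ih.1
        haveI := (hNfin n).1
        obtain ⟨fd, hle⟩ :=
          finQuot_inf (𝕂 := 𝕂) (A := Cn φ U n) (B := Submodule.comap (φ ^ n) U)
        rw [← Cn_succ] at fd hle
        haveI := fd
        have hlt := finQuot_strict (𝕂 := 𝕂) (hCnlt n)
        rw [ih.2] at hlt hle
        rw [(hNfin n).2] at hle
        exact ⟨fd, by omega⟩
  have hrange : ∀ m : ℕ,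
      Module.finrank 𝕂 (V ⧸ (Finset.range m).inf fun k => Submodule.comap (φ ^ k) U) = m := by
    intro m
    rw [← Cn_eq_inf]
    exact (hdim m).2
  refine ⟨fun n => ⟨hNclosed n, (hNfin n).2⟩, ?_, ?_⟩
  · exact coindependent_of_card _ hNfin
      (finQuot_card_eq _ hNfin hrange)
  · have hCnleU : ∀ n : ℕ, 1 ≤ n → Cn φ U n ≤ U := by
      intro n hn
      have h := Cn_antitone φ U hn
      rwa [Cn_one] at h
    have hrankq : ∀ n : ℕ, 1 ≤ n →
        Module.rank 𝕂 (↥U ⧸ Submodule.comap U.subtype (Cn φ U n)) = ((n - 1 : ℕ) : Cardinal) := by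
      intro n hn
      haveI := (hdim n).1
      obtain ⟨hfd, heq⟩ := finQuot_three (𝕂 := 𝕂) (hCnleU n hn)
      haveI := hfd
      rw [(hdim n).2, hcocyclic] at heq
      have hx : Module.finrank 𝕂 (↥U ⧸ Submodule.comap U.subtype (Cn φ U n)) = n - 1 := by
        omega
      rw [← Module.finrank_eq_rank 𝕂, hx]
    have hfun : (fun n : ℕ =>
        (((Module.rank 𝕂 (↥U ⧸ Submodule.comap U.subtype (Cn φ U n))).toENat : ℕ∞) : ℝ≥0∞) /
          (n : ℝ≥0∞)) =ᶠ[Filter.atTop] fun n : ℕ => 1 - (n : ℝ≥0∞)⁻¹ := by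
      filter_upwards [Filter.eventually_ge_atTop 1] with n hn
      obtain ⟨m, rfl⟩ := Nat.exists_eq_add_of_le hn
      rw [hrankq (1 + m) (by omega)]
      have h1 : (1 + m - 1 : ℕ) = m := by omega
      rw [h1, Cardinal.toENat_nat]
      have hcast : (((m : ℕ∞)) : ℝ≥0∞) = (m : ℝ≥0∞) := by push_cast; ring
      rw [hcast]
      have hne0 : ((m : ℝ≥0∞) + 1) ≠ 0 := by simp
      have hnt : ((m : ℝ≥0∞) + 1) ≠ ⊤ := by simp
      have key : (m : ℝ≥0∞) / ((m : ℝ≥0∞) + 1) = 1 - ((m : ℝ≥0∞) + 1)⁻¹ := by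
        refine (ENNReal.sub_eq_of_eq_add (by simp) ?_).symm
        rw [← one_div, ENNReal.div_add_div_same, ENNReal.div_self hne0 hnt]
      have hc2 : ((1 + m : ℕ) : ℝ≥0∞) = (m : ℝ≥0∞) + 1 := by push_cast; ring
      rw [hc2, key]
    have htends : Filter.Tendsto (fun n : ℕ => 1 - (n : ℝ≥0∞)⁻¹) Filter.atTop (nhds 1) := by
      have h := (ENNReal.continuous_sub_left (a := (1 : ℝ≥0∞)) ENNReal.one_ne_top).tendsto 0
      simpa [Function.comp_def] using h.comp ENNReal.tendsto_inv_nat_nhds_zero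
    exact Filter.Tendsto.limsup_eq (Filter.Tendsto.congr' hfun.symm htends)
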